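/- Let V be a 2m × 2m quantum covariance matrix in xp-form, V = [[Q, 0],[0, P]] with respect to the xp block partition. Then there exists an invertible m × m real matrix M such that the symplectic matrix S = [[M^{-1}, 0],[0, M^T]] brings V into Williamson form: S V S^T = [[D, 0],[0, D]] with D diagonal positive. -/

import Mathlib

open Matrix ComplexOrder

/-- The standard symplectic form on `m` modes, in the `x|p` block representation. -/
noncomputable def Omg (m : ℕ) : Matrix (Fin m ⊕ Fin m) (Fin m ⊕ Fin m) ℝ :=
  fromBlocks 0 1 (-1) 0

section aux

variable {n : Type*} [Fintype n] [DecidableEq n]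

lemma conjTranspose_mul_mul_posDef {A B : Matrix n n ℝ} (hA : A.PosDef) (hB : IsUnit B) :
    (Bᴴ * A * B).PosDef := by
  refine Matrix.PosDef.of_dotProduct_mulVec_pos (Matrix.isHermitian_conjTranspose_mul_mul B hA.1) fun x hx => ?_
  have hx' : B *ᵥ x ≠ 0 := fun h => hx <| by
    have := Matrix.mulVec_injective_iff_isUnit.mpr hB (a₁ := x) (a₂ := 0)
    simpa using this (by simpa using h)
  simpa only [star_mulVec, dotProduct_mulVec, vecMul_vecMul] using hA.dotProduct_mulVec_pos hx'

lemma mul_mul_conjTranspose_posDef {A B : Matrix n n ℝ} (hA : A.PosDef) (hB : IsUnit B) :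
    (B * A * Bᴴ).PosDef := by
  have hB' : IsUnit (Bᴴ) := by
    rw [Matrix.isUnit_iff_isUnit_det] at hB ⊢
    simpa using hB
  simpa using conjTranspose_mul_mul_posDef hA hB'

end aux

open scoped MatrixOrder

/-- A QCM in xp-form `V = [[Q,0],[0,P]]` (with `Q, P` positive definite) can be brought
into Williamson form by a symplectic matrix of the form `S = [[M⁻¹,0],[0,Mᵀ]]`:
`S V Sᵀ = [[D,0],[0,D]]` with `D` diagonal positive. -/
theorem xp_form_williamson {m : ℕ}
    (Q P : Matrix (Fin m) (Fin m) ℝ) (hQ : Q.PosDef) (hP : P.PosDef)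
    (hQCM : (((fromBlocks Q 0 0 P : Matrix (Fin m ⊕ Fin m) (Fin m ⊕ Fin m) ℝ).map Complex.ofReal)
      - Complex.I • (Omg m).map Complex.ofReal).PosSemidef) :
    ∃ (M : Matrix (Fin m) (Fin m) ℝ) (d : Fin m → ℝ),
      IsUnit M.det ∧ (∀ i, 0 < d i) ∧
      (fromBlocks M⁻¹ 0 0 Mᵀ) * (fromBlocks Q 0 0 P) * (fromBlocks M⁻¹ 0 0 Mᵀ)ᵀ
        = fromBlocks (Matrix.diagonal d) 0 0 (Matrix.diagonal d) := by
  classical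
  -- the positive square root of `Q`
  set R := CFC.sqrt Q with hRdef
  have hRps : R.PosSemidef := (CFC.sqrt_nonneg Q).posSemidef
  have hRsq : R * R = Q := CFC.sqrt_mul_sqrt_self Q hQ.posSemidef.nonneg
  have hRherm : Rᴴ = R := hRps.1
  have hRt : Rᵀ = R := by simpa [Matrix.conjTranspose_eq_transpose_of_trivial] using hRherm
  have hRdet : IsUnit R.det := by
    have h2 : R.det * R.det = Q.det := by rw [← Matrix.det_mul, hRsq]
    have : R.det ≠ 0 := fun h => by
      have := hQ.det_pos
      rw [← h2, h] at this; simp at this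
    exact this.isUnit
  have hRunit : IsUnit R := (Matrix.isUnit_iff_isUnit_det _).mpr hRdet
  have hRinv : R * R⁻¹ = 1 := Matrix.mul_nonsing_inv _ hRdet
  have hRinv' : R⁻¹ * R = 1 := Matrix.nonsing_inv_mul _ hRdet
  -- the positive definite matrix `A = R * P * R`
  set A := R * P * R with hAdef
  have hA : A.PosDef := by
    have := mul_mul_conjTranspose_posDef hP hRunit
    rwa [hRherm] at this
  have hAh : A.IsHermitian := hA.1
  set lam := hAh.eigenvalues with hlamdef
  set U := (hAh.eigenvectorUnitary : Matrix (Fin m) (Fin m) ℝ) with hUdef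
  have hUU : star U * U = 1 := Matrix.mem_unitaryGroup_iff'.mp hAh.eigenvectorUnitary.2
  have hUU' : U * star U = 1 := Matrix.mem_unitaryGroup_iff.mp hAh.eigenvectorUnitary.2
  have hUt : star U = Uᵀ := by
    simp [Matrix.star_eq_conjTranspose, Matrix.conjTranspose_eq_transpose_of_trivial]
  have hdiag : Uᵀ * A * U = diagonal lam := by
    rw [← hUt]
    simpa using hAh.conjStarAlgAut_star_eigenvectorUnitary
  have hlam : ∀ i, 0 < lam i := hA.eigenvalues_pos
  set d : Fin m → ℝ := fun i => Real.sqrt (lam i) with hddef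
  have hd : ∀ i, 0 < d i := fun i => Real.sqrt_pos.mpr (hlam i)
  set e : Fin m → ℝ := fun i => (Real.sqrt (d i))⁻¹ with hedef
  have he : ∀ i, 0 < e i := fun i => inv_pos.mpr (Real.sqrt_pos.mpr (hd i))
  have hesq : ∀ i, (e i)⁻¹ * (e i)⁻¹ = d i := fun i => by
    simp only [hedef, inv_inv]
    exact Real.mul_self_sqrt (hd i).le
  set M : Matrix (Fin m) (Fin m) ℝ := R * U * diagonal e with hMdef
  set N : Matrix (Fin m) (Fin m) ℝ := diagonal (fun i => (e i)⁻¹) * Uᵀ * R⁻¹ with hNdef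
  have hMN : M * N = 1 := by
    have : diagonal e * diagonal (fun i => (e i)⁻¹) = 1 := by
      rw [Matrix.diagonal_mul_diagonal,
        show (fun i => e i * (e i)⁻¹) = fun _ => (1:ℝ) from
          funext fun i => mul_inv_cancel₀ (he i).ne', Matrix.diagonal_one]
    calc M * N = R * U * (diagonal e * diagonal (fun i => (e i)⁻¹)) * Uᵀ * R⁻¹ := by
          simp only [hMdef, hNdef, Matrix.mul_assoc]
      _ = R * (U * Uᵀ) * R⁻¹ := by rw [this]; simp only [Matrix.mul_one, Matrix.mul_assoc]
      _ = 1 := by rw [← hUt, hUU', Matrix.mul_one, hRinv]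
  have hNM : N * M = 1 := by
    have : diagonal (fun i => (e i)⁻¹) * diagonal e = 1 := by
      rw [Matrix.diagonal_mul_diagonal,
        show (fun i => (e i)⁻¹ * e i) = fun _ => (1:ℝ) from
          funext fun i => inv_mul_cancel₀ (he i).ne', Matrix.diagonal_one]
    calc N * M = diagonal (fun i => (e i)⁻¹) * Uᵀ * (R⁻¹ * R) * U * diagonal e := by
          simp only [hMdef, hNdef, Matrix.mul_assoc]
      _ = diagonal (fun i => (e i)⁻¹) * (Uᵀ * U) * diagonal e := by
          rw [hRinv']; simp only [Matrix.mul_one, Matrix.mul_assoc]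
      _ = 1 := by rw [← hUt, hUU, Matrix.mul_one, this]
  have hMinv : M⁻¹ = N := Matrix.inv_eq_right_inv hMN
  have hMdet : IsUnit M.det := by
    have : M.det * N.det = 1 := by rw [← Matrix.det_mul, hMN, Matrix.det_one]
    exact IsUnit.of_mul_eq_one _ this
  refine ⟨M, d, hMdet, hd, ?_⟩
  have hRinvT : R⁻¹ᵀ = R⁻¹ := by rw [Matrix.transpose_nonsing_inv, hRt]
  have h1 : M⁻¹ * Q * M⁻¹ᵀ = diagonal d := by
    rw [hMinv, hNdef, ← hRsq]
    have hNt : (diagonal (fun i => (e i)⁻¹) * Uᵀ * R⁻¹)ᵀ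
        = R⁻¹ * U * diagonal (fun i => (e i)⁻¹) := by
      simp [Matrix.transpose_mul, hRinvT, Matrix.diagonal_transpose, Matrix.mul_assoc]
    rw [hNt]
    calc diagonal (fun i => (e i)⁻¹) * Uᵀ * R⁻¹ * (R * R) * (R⁻¹ * U * diagonal (fun i => (e i)⁻¹))
        = diagonal (fun i => (e i)⁻¹) * Uᵀ * (R⁻¹ * R) * (R * R⁻¹) * U
            * diagonal (fun i => (e i)⁻¹) := by
          simp only [Matrix.mul_assoc]
      _ = diagonal (fun i => (e i)⁻¹) * (Uᵀ * U) * diagonal (fun i => (e i)⁻¹) := by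
          rw [hRinv', hRinv]; simp only [Matrix.mul_one, Matrix.mul_assoc]
      _ = diagonal d := by
          rw [← hUt, hUU, Matrix.mul_one, Matrix.diagonal_mul_diagonal,
            show (fun i => (e i)⁻¹ * (e i)⁻¹) = d from funext hesq]
  have h2 : Mᵀ * P * M = diagonal d := by
    have hMt : Mᵀ = diagonal e * Uᵀ * R := by
      simp [hMdef, Matrix.transpose_mul, hRt, Matrix.diagonal_transpose, Matrix.mul_assoc]
    rw [hMt, hMdef]
    calc diagonal e * Uᵀ * R * P * (R * U * diagonal e)
        = diagonal e * (Uᵀ * (R * P * R) * U) * diagonal e := by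
          simp only [Matrix.mul_assoc]
      _ = diagonal e * diagonal lam * diagonal e := by rw [← hAdef, hdiag]
      _ = diagonal d := by
          have key : (fun i => e i * lam i * e i) = d := by
            funext i
            have hd2 : d i * d i = lam i := Real.mul_self_sqrt (hlam i).le
            have h1 : e i * e i = (d i)⁻¹ := by
              rw [hedef]; simp only
              rw [← mul_inv, Real.mul_self_sqrt (hd i).le]
            calc e i * lam i * e i = (e i * e i) * lam i := by ring
              _ = (d i)⁻¹ * (d i * d i) := by rw [h1, hd2]
              _ = d i := by field_simp
          rw [Matrix.diagonal_mul_diagonal, Matrix.diagonal_mul_diagonal, key]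
  rw [Matrix.fromBlocks_transpose, Matrix.fromBlocks_multiply, Matrix.fromBlocks_multiply]
  simp [h1, h2]
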